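/- Let v = (v₁, v₂) ∈ ℝ² with v ≠ 0, and let π : ℝ² → (ℝ⧸ℤ) × (ℝ⧸ℤ) be the componentwise quotient homomorphism onto the two-torus. If v₁ and v₂ are linearly independent over ℚ, then the image π({t·v : t ∈ ℝ}) is dense in the torus. If v₁ and v₂ are linearly dependent over ℚ, then π({t·v : t ∈ ℝ}) is a closed (indeed compact) subset of the torus. -/

import Mathlib

private lemma intCoe_addCircle (k : ℤ) : ((k : ℝ) : AddCircle (1:ℝ)) = 0 :=
  (QuotientAddGroup.eq_zero_iff _).2 ⟨k, by simp⟩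

private noncomputable def torusLine (v₁ v₂ : ℝ) :
    ℝ →+ (AddCircle (1:ℝ) × AddCircle (1:ℝ)) where
  toFun t := (((t * v₁ : ℝ) : AddCircle (1:ℝ)), ((t * v₂ : ℝ) : AddCircle (1:ℝ)))
  map_zero' := by simp
  map_add' x y := by
    simp only [add_mul, Prod.mk_add_mk, Prod.mk.injEq]
    constructor <;> rw [← AddCircle.coe_add]

private lemma torusLine_continuous (v₁ v₂ : ℝ) : Continuous (torusLine v₁ v₂) := by
  exact Continuous.prodMk
    ((AddCircle.continuous_mk' 1).comp (continuous_id.mul continuous_const))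
    ((AddCircle.continuous_mk' 1).comp (continuous_id.mul continuous_const))

/-- the Kronecker dichotomy on the two-torus: the image of the line
`t ↦ t·(v₁, v₂)` is dense if `v₁, v₂` are ℚ-linearly independent, and closed (indeed
compact) if they are ℚ-linearly dependent. -/
theorem stmt_18 (v₁ v₂ : ℝ) (hv : (v₁, v₂) ≠ (0, 0)) :
    ((∀ s t : ℚ, (s : ℝ) * v₁ + (t : ℝ) * v₂ = 0 → s = 0 ∧ t = 0) →
      Dense (Set.range fun t : ℝ =>
        (((t * v₁ : ℝ) : AddCircle (1 : ℝ)), ((t * v₂ : ℝ) : AddCircle (1 : ℝ))))) ∧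
    ((∃ s t : ℚ, ¬(s = 0 ∧ t = 0) ∧ (s : ℝ) * v₁ + (t : ℝ) * v₂ = 0) →
      IsClosed (Set.range fun t : ℝ =>
        (((t * v₁ : ℝ) : AddCircle (1 : ℝ)), ((t * v₂ : ℝ) : AddCircle (1 : ℝ)))) ∧
      IsCompact (Set.range fun t : ℝ =>
        (((t * v₁ : ℝ) : AddCircle (1 : ℝ)), ((t * v₂ : ℝ) : AddCircle (1 : ℝ))))) := by
  constructor
  · -- dense case
    intro hind
    have hv₂ : v₂ ≠ 0 := by
      intro h
      have := (hind 0 1 (by simp [h])).2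
      norm_num at this
    set α : ℝ := v₁ / v₂ with hα
    have hαirr : ∀ q : ℚ, (q : ℝ) ≠ α := by
      intro q hq
      have := (hind 1 (-q) (by push_cast; rw [eq_div_iff hv₂] at hq; linarith)).1
      norm_num at this
    set φ := torusLine v₁ v₂ with hφ
    set H := φ.range.topologicalClosure with hH
    -- every (c, 0) lies in H
    have key : ∀ c : AddCircle (1:ℝ), (c, (0 : AddCircle (1:ℝ))) ∈ H := by
      -- the subgroup generated by α and 1 is dense in ℝ
      set G := AddSubgroup.closure ({α, 1} : Set ℝ) with hG
      have hGdense : Dense (G : Set ℝ) := by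
        rcases G.dense_or_cyclic with h | ⟨a, ha⟩
        · exact h
        · exfalso
          have hαG : α ∈ G := AddSubgroup.subset_closure (by simp)
          have h1G : (1:ℝ) ∈ G := AddSubgroup.subset_closure (by simp)
          rw [ha, AddSubgroup.mem_closure_singleton] at hαG h1G
          obtain ⟨n, hn⟩ := hαG
          obtain ⟨m, hm⟩ := h1G
          have hm0 : (m : ℝ) ≠ 0 := by
            intro h
            rw [zsmul_eq_mul, h, zero_mul] at hm
            norm_num at hm
          apply hαirr ((n : ℚ) / (m : ℚ))
          rw [zsmul_eq_mul] at hn hm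
          push_cast
          rw [div_eq_iff hm0]
          have h1 : α * (m : ℝ) = (n : ℝ) * (a * (m : ℝ)) := by rw [← hn]; ring
          have h2 : a * (m : ℝ) = 1 := by linarith [hm]
          rw [h2, mul_one] at h1
          linarith
      -- elements of G, pushed to (AddCircle, 0), land in H
      have mem_of_G : ∀ g ∈ G, ((g : AddCircle (1:ℝ)), (0 : AddCircle (1:ℝ))) ∈ H := by
        intro g hg
        induction hg using AddSubgroup.closure_induction with
        | mem x hx =>
          rcases hx with hx | hx
          · subst hx
            have : φ (1 / v₂) = ((α : AddCircle (1:ℝ)), (0 : AddCircle (1:ℝ))) := by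
              have h1 : (1 / v₂) * v₁ = α := by rw [hα]; field_simp
              have h2 : (1 / v₂) * v₂ = (1 : ℝ) := by field_simp
              show (_, _) = (_, _)
              rw [h1, h2]
              have : ((1:ℝ) : AddCircle (1:ℝ)) = 0 := by
                simp [intCoe_addCircle 1]
              rw [this]
            rw [← this]
            exact AddSubgroup.le_topologicalClosure _ ⟨1 / v₂, rfl⟩
          · simp only [Set.mem_singleton_iff] at hx
            subst hx
            have : ((1:ℝ) : AddCircle (1:ℝ)) = 0 := by simp [intCoe_addCircle 1]
            rw [this]
            exact zero_mem H
        | zero =>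
          have : ((0:ℝ) : AddCircle (1:ℝ)) = 0 := by norm_num
          rw [this]
          exact zero_mem H
        | add x y hx hy ihx ihy =>
          have : ((x + y : ℝ) : AddCircle (1:ℝ)) = (x : AddCircle (1:ℝ)) + y := by
            norm_cast
          rw [this]
          have := add_mem ihx ihy
          simpa using this
        | neg x hx ihx =>
          have : ((-x : ℝ) : AddCircle (1:ℝ)) = -(x : AddCircle (1:ℝ)) := by
            norm_cast
          rw [this]
          have := neg_mem ihx
          simpa using this
      -- density transfer
      intro c
      have hsurj : Function.Surjective (fun x : ℝ => (x : AddCircle (1:ℝ))) :=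
        QuotientAddGroup.mk_surjective
      have hdr : DenseRange (fun x : ℝ => (x : AddCircle (1:ℝ))) := hsurj.denseRange
      have himg : Dense ((fun x : ℝ => (x : AddCircle (1:ℝ))) '' G) :=
        hdr.dense_image (AddCircle.continuous_mk' 1) hGdense
      have hmem : (c, (0 : AddCircle (1:ℝ))) ∈
          closure (((fun x : ℝ => (x : AddCircle (1:ℝ))) '' G) ×ˢ ({0} : Set (AddCircle (1:ℝ)))) := by
        rw [closure_prod_eq]
        exact ⟨himg c, subset_closure rfl⟩
      have hsub : (((fun x : ℝ => (x : AddCircle (1:ℝ))) '' G) ×ˢ ({0} : Set (AddCircle (1:ℝ))))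
          ⊆ (H : Set _) := by
        rintro ⟨c', z⟩ ⟨⟨g, hg, rfl⟩, hz⟩
        simp only [Set.mem_singleton_iff] at hz
        subst hz
        exact mem_of_G g hg
      exact closure_minimal hsub (AddSubgroup.isClosed_topologicalClosure _) hmem
    -- conclude density
    intro p
    rcases p with ⟨a, b⟩
    obtain ⟨x, hx⟩ := QuotientAddGroup.mk_surjective b
    have hmem : (a, b) ∈ (H : Set _) := by
      have h1 : φ (x / v₂) ∈ H := AddSubgroup.le_topologicalClosure _ ⟨x / v₂, rfl⟩
      have h2 : (a - ((x / v₂ * v₁ : ℝ) : AddCircle (1:ℝ)), (0 : AddCircle (1:ℝ))) ∈ H :=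
        key _
      have h3 := add_mem h2 h1
      have hxv : (x / v₂) * v₂ = x := by field_simp
      have hφv : φ (x / v₂) = (((x / v₂ * v₁ : ℝ) : AddCircle (1:ℝ)),
          ((x / v₂ * v₂ : ℝ) : AddCircle (1:ℝ))) := rfl
      have : (a - ((x / v₂ * v₁ : ℝ) : AddCircle (1:ℝ)), (0 : AddCircle (1:ℝ))) + φ (x / v₂)
          = (a, b) := by
        rw [hφv, Prod.mk_add_mk, sub_add_cancel, hxv, hx, zero_add]
      rwa [this] at h3
    have : (H : Set _) = closure (Set.range fun t : ℝ =>
        (((t * v₁ : ℝ) : AddCircle (1 : ℝ)), ((t * v₂ : ℝ) : AddCircle (1 : ℝ)))) := by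
      rfl
    rw [this] at hmem
    exact hmem
  · -- closed / compact case
    rintro ⟨s, t, hst, heq⟩
    set f : ℝ → AddCircle (1:ℝ) × AddCircle (1:ℝ) := fun t : ℝ =>
      (((t * v₁ : ℝ) : AddCircle (1 : ℝ)), ((t * v₂ : ℝ) : AddCircle (1 : ℝ))) with hf
    have hcont : Continuous f := torusLine_continuous v₁ v₂
    -- find a period T with T*v₁ and T*v₂ integers
    obtain ⟨T, hT0, k, hk, l, hl⟩ :
        ∃ T : ℝ, T ≠ 0 ∧ ∃ k : ℤ, T * v₁ = k ∧ ∃ l : ℤ, T * v₂ = l := by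
      by_cases hv₂ : v₂ = 0
      · have hv₁ : v₁ ≠ 0 := by
          intro h; exact hv (by simp [h, hv₂])
        exact ⟨1 / v₁, by simp [hv₁], 1, by field_simp; norm_num, 0, by simp [hv₂]⟩
      · have hs : s ≠ 0 := by
          intro h
          subst h
          simp only [Rat.cast_zero, zero_mul, zero_add, mul_eq_zero] at heq
          rcases heq with h | h
          · exact hst ⟨rfl, by exact_mod_cast h⟩
          · exact hv₂ h
        set q : ℚ := -t / s with hq
        have hv₁q : v₁ = (q : ℝ) * v₂ := by
          have hs' : (s : ℝ) ≠ 0 := by exact_mod_cast hs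
          push_cast [hq]
          field_simp
          linarith
        have hden : ((q.den : ℝ)) ≠ 0 := Nat.cast_ne_zero.mpr q.den_nz
        refine ⟨(q.den : ℝ) / v₂, div_ne_zero hden hv₂, q.num, ?_, q.den, ?_⟩
        · rw [hv₁q]
          have h1 : (q : ℝ) * (q.den : ℝ) = (q.num : ℝ) := by
            rw [Rat.cast_def]
            field_simp
          calc ((q.den : ℝ) / v₂) * ((q : ℝ) * v₂)
              = ((q : ℝ) * (q.den : ℝ)) * (v₂ / v₂) := by ring
            _ = (q.num : ℝ) := by rw [div_self hv₂, h1, mul_one]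
        · rw [div_mul_cancel₀ _ hv₂]; norm_cast
    -- periodicity
    have hper : Function.Periodic f T := by
      intro x
      have h1 : (x + T) * v₁ = x * v₁ + (k : ℝ) := by rw [add_mul, hk]
      have h2 : (x + T) * v₂ = x * v₂ + (l : ℝ) := by rw [add_mul, hl]
      have e1 : ((x * v₁ + (k : ℝ) : ℝ) : AddCircle (1:ℝ)) = ((x * v₁ : ℝ) : AddCircle (1:ℝ)) :=
        (QuotientAddGroup.eq_iff_sub_mem).2 ⟨k, by simp⟩
      have e2 : ((x * v₂ + (l : ℝ) : ℝ) : AddCircle (1:ℝ)) = ((x * v₂ : ℝ) : AddCircle (1:ℝ)) :=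
        (QuotientAddGroup.eq_iff_sub_mem).2 ⟨l, by simp⟩
      show (_, _) = (_, _)
      rw [h1, h2, e1, e2]
    have hrange : Set.range f = f '' Set.uIcc 0 (0 + T) := (hper.image_uIcc hT0 0).symm
    have hcomp : IsCompact (Set.range f) := by
      rw [hrange]; exact isCompact_uIcc.image hcont
    exact ⟨hcomp.isClosed, hcomp⟩
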